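/- Let p be a prime with p ≡ 1 (mod 4), t, b positive integers with t² + 4 = b²p, and 𝓕, 𝓛 the associated Lucas sequences. Let m and n be odd integers, and set T := 𝓛_n𝓛_m and N := 𝓕_m·b²p·(𝓛_m𝓕_n − 2𝓕_m) + 4. Then 4N = 𝓛_n²𝓛_m² − (𝓛_m𝓕_n − 2𝓕_m)²·b²p, and (N + 4)² − 4T² = 𝓛_m²·b²p·(𝓛_m𝓕_n − 2𝓕_m)². In particular (N + 4)² − 4T² lies in p·ℚ², i.e., it is p times the square of a rational number. -/

import Mathlib

theorem stmt_14 (p : ℕ) (hp : p.Prime) (hp4 : p % 4 = 1)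
    (t b : ℤ) (ht : 0 < t) (hb : 0 < b)
    (hpt : t ^ 2 + 4 = b ^ 2 * (p : ℤ))
    (F L : ℤ → ℤ) (hF0 : F 0 = 0) (hF1 : F 1 = 1)
    (hF : ∀ k : ℤ, F (k + 2) = t * F (k + 1) + F k)
    (hL0 : L 0 = 2) (hL1 : L 1 = t)
    (hL : ∀ k : ℤ, L (k + 2) = t * L (k + 1) + L k)
    (m n : ℤ) (hm : Odd m) (hn : Odd n)
    (T N : ℤ) (hT : T = L n * L m)
    (hN : N = F m * b ^ 2 * (p : ℤ) * (L m * F n - 2 * F m) + 4) :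
    4 * N = L n ^ 2 * L m ^ 2 - (L m * F n - 2 * F m) ^ 2 * b ^ 2 * (p : ℤ) ∧
    (N + 4) ^ 2 - 4 * T ^ 2 = L m ^ 2 * b ^ 2 * (p : ℤ) * (L m * F n - 2 * F m) ^ 2 ∧
    ∃ r : ℚ, (((N + 4) ^ 2 - 4 * T ^ 2 : ℤ) : ℚ) = (p : ℚ) * r ^ 2 := by
  -- key: 2 L(k+1) = t L k + (t²+4) F k and 2 F(k+1) = L k + t F k
  have key : ∀ k : ℤ, 2 * L (k+1) = t * L k + (t^2+4) * F k ∧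
      2 * F (k+1) = L k + t * F k := by
    intro k
    induction k using Int.induction_on with
    | zero =>
      rw [show (0:ℤ)+1 = 1 from by norm_num, hL1, hF1, hL0, hF0]
      constructor <;> ring
    | succ k ih =>
      obtain ⟨h1, h2⟩ := ih
      have e1 := hL k
      have e2 := hF k
      rw [show ((k:ℤ)+1)+1 = (k:ℤ)+2 from by ring]
      constructor
      · have g : 2*(2 * L ((k:ℤ)+2)) = 2*(t * L ((k:ℤ)+1) + (t^2+4) * F ((k:ℤ)+1)) := by
          linear_combination 4*e1 + t*h1 - (t^2+4)*h2
        linarith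
      · have g : 2*(2 * F ((k:ℤ)+2)) = 2*(L ((k:ℤ)+1) + t * F ((k:ℤ)+1)) := by
          linear_combination 4*e2 - h1 + t*h2
        linarith
    | pred k ih =>
      obtain ⟨h1, h2⟩ := ih
      have e1 := hL (-(k:ℤ) - 1)
      have e2 := hF (-(k:ℤ) - 1)
      rw [show (-(k:ℤ)-1)+2 = -(k:ℤ)+1 from by ring,
          show (-(k:ℤ)-1)+1 = -(k:ℤ) from by ring] at e1 e2
      rw [show (-(k:ℤ)-1)+1 = -(k:ℤ) from by ring]
      constructor
      · have g : 2*(2 * L (-(k:ℤ))) = 2*(t * L (-(k:ℤ)-1) + (t^2+4) * F (-(k:ℤ)-1)) := by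
          linear_combination 2*t*e1 + 2*(t^2+4)*e2 - t*h1 - (t^2+4)*h2
        linarith
      · have g : 2*(2 * F (-(k:ℤ))) = 2*(L (-(k:ℤ)-1) + t * F (-(k:ℤ)-1)) := by
          linear_combination 2*e1 + 2*t*e2 - h1 - t*h2
        linarith
  -- Q flips sign each step
  have step : ∀ k : ℤ, L (k+1)^2 - (t^2+4) * F (k+1)^2
      = -(L k ^2 - (t^2+4) * F k ^2) := by
    intro k
    obtain ⟨h1, h2⟩ := key k
    have g : 4*(L (k+1)^2 - (t^2+4) * F (k+1)^2)
        = 4*(-(L k ^2 - (t^2+4) * F k ^2)) := by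
      linear_combination (2*L (k+1) + t*L k + (t^2+4)*F k) * h1
        - (t^2+4)*(2*F (k+1) + L k + t*F k) * h2
    linarith
  -- Q is invariant under k ↦ k+2
  have step2 : ∀ k : ℤ, L (k+2)^2 - (t^2+4) * F (k+2)^2
      = L k ^2 - (t^2+4) * F k ^2 := by
    intro k
    have s1 := step k
    have s2 := step (k+1)
    rw [show (k:ℤ)+1+1 = k+2 from by ring] at s2
    linarith
  -- Q at odd indices is -4
  have oddQ : ∀ k : ℤ, Odd k → L k ^2 - (t^2+4) * F k ^2 = -4 := by
    intro k hk
    obtain ⟨j, rfl⟩ := hk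
    induction j using Int.induction_on with
    | zero =>
      rw [show 2*(0:ℤ)+1 = 1 from by norm_num, hL1, hF1]
      ring
    | succ j ih =>
      have s := step2 (2*(j:ℤ)+1)
      rw [show 2*(j:ℤ)+1+2 = 2*((j:ℤ)+1)+1 from by ring] at s
      linarith
    | pred j ih =>
      have s := step2 (2*(-(j:ℤ)-1)+1)
      rw [show 2*(-(j:ℤ)-1)+1+2 = 2*(-(j:ℤ))+1 from by ring] at s
      linarith
  have hQm := oddQ m hm
  have hQn := oddQ n hn
  rw [hpt] at hQm hQn
  have g1 : 4 * N = L n ^ 2 * L m ^ 2 - (L m * F n - 2 * F m) ^ 2 * b ^ 2 * (p : ℤ) := by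
    rw [hN]
    linear_combination (- (L m ^ 2)) * hQn + 4 * hQm
  have g2 : (N + 4) ^ 2 - 4 * T ^ 2
      = L m ^ 2 * b ^ 2 * (p : ℤ) * (L m * F n - 2 * F m) ^ 2 := by
    rw [hN, hT]
    linear_combination (16 - b^2*(p:ℤ)*(L m * F n - 2 * F m)^2) * hQm
      + (-(4 * L m ^2)) * hQn
  refine ⟨g1, g2, ⟨((L m * b * (L m * F n - 2 * F m) : ℤ) : ℚ), ?_⟩⟩
  rw [g2]
  push_cast
  ring
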